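/- Every stable integral domain is a big ideal domain. That is, if R is an integral domain in which every nonzero ideal I is invertible as an ideal of its endomorphism ring T = (I : I) (meaning I·(T : I) = T), then for all ideals I ⊊ J of R and every n ≥ 1 one has I^n ⊊ J^n. -/

import Mathlib

/-- An ideal `I` of a commutative ring `R` is a *big ideal* if whenever `J ⊊ I`,
`J ^ n ⊊ I ^ n` for every positive integer `n`. -/
def Ideal.IsBig {R : Type*} [CommRing R] (I : Ideal R) : Prop :=
  ∀ J : Ideal R, J < I → ∀ n : ℕ, 1 ≤ n → J ^ n < I ^ n

/-- A commutative ring is a *big ideal ring* if every ideal is a big ideal. -/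
def IsBigIdealRing (R : Type*) [CommRing R] : Prop :=
  ∀ I : Ideal R, I.IsBig

/-- **Proposition 2.12.** Every stable domain is a big ideal domain: if every nonzero
ideal `I` of the domain `R` is invertible in its endomorphism ring `T = (I : I)`,
i.e. `I · (T : I) = T` (as fractional ideals, `T = I / I` and `(T : I) = T / I`),
then `R` is a big ideal domain. -/
private theorem fi_pow_mono {R : Type*} [CommRing R] {S : Submonoid R} {P : Type*}
    [CommRing P] [Algebra R P] [IsLocalization S P]
    {A B : FractionalIdeal S P} (h : A ≤ B) : ∀ k : ℕ, A ^ k ≤ B ^ k := by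
  intro k
  induction k with
  | zero => simp
  | succ k ih =>
    calc A ^ (k + 1) = A ^ k * A := pow_succ A k
      _ ≤ B ^ k * A := (fun h => mul_le_mul' h le_rfl) ih
      _ ≤ B ^ k * B := (fun h => mul_le_mul' le_rfl h) h
      _ = B ^ (k + 1) := (pow_succ B k).symm

theorem isBigIdealRing_of_stable (R : Type*) [CommRing R] [IsDomain R]
    (hstable : ∀ I : Ideal R, I ≠ ⊥ →
      (I : FractionalIdeal (nonZeroDivisors R) (FractionRing R)) *
          (((I : FractionalIdeal (nonZeroDivisors R) (FractionRing R)) / I) / I)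
        = (I : FractionalIdeal (nonZeroDivisors R) (FractionRing R)) / I) :
    IsBigIdealRing R := by
  intro I J hJI n hn
  have hle : J ^ n ≤ I ^ n := Ideal.pow_right_mono hJI.le n
  refine lt_of_le_of_ne hle fun heq => ?_
  obtain ⟨m, rfl⟩ : ∃ m, n = m + 1 := ⟨n - 1, (Nat.succ_pred_eq_of_pos hn).symm⟩
  set n := m + 1 with hndef
  have hI0 : I ≠ ⊥ := by
    rintro rfl
    exact absurd hJI (by simp)
  have hJ0 : J ≠ ⊥ := by
    rintro rfl
    obtain ⟨x, hxI, hx0⟩ := Submodule.exists_mem_ne_zero_of_ne_bot hI0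
    have hxn : x ^ n ∈ I ^ n := Ideal.pow_mem_pow hxI n
    rw [← heq] at hxn
    have : (⊥ : Ideal R) ^ n = ⊥ := by
      rw [← Ideal.zero_eq_bot, zero_pow (Nat.succ_ne_zero m)]
    rw [this, Submodule.mem_bot] at hxn
    exact hx0 (pow_eq_zero_iff (Nat.succ_ne_zero m) |>.mp hxn)
  -- move to fractional ideals
  set K := FractionRing R
  set A : FractionalIdeal (nonZeroDivisors R) K := (I : FractionalIdeal (nonZeroDivisors R) K)
    with hAdef
  set B : FractionalIdeal (nonZeroDivisors R) K := (J : FractionalIdeal (nonZeroDivisors R) K)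
    with hBdef
  have hA0 : A ≠ 0 := by simpa [hAdef] using hI0
  have hB0 : B ≠ 0 := by simpa [hBdef] using hJ0
  have hBA : B ≤ A := (FractionalIdeal.coeIdeal_le_coeIdeal K).mpr hJI.le
  have hpow : B ^ n = A ^ n := by
    rw [hAdef, hBdef, ← FractionalIdeal.coeIdeal_pow, ← FractionalIdeal.coeIdeal_pow, heq]
  set TI := A / A with hTIdef
  set TJ := B / B with hTJdef
  set S := TI / A with hSdef
  set SJ := TJ / B with hSJdef
  have hAS : A * S = TI := hstable I hI0
  have hBSJ : B * SJ = TJ := hstable J hJ0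
  have one_le_TI : 1 ≤ TI := (FractionalIdeal.le_div_iff_mul_le hA0).mpr (by rw [one_mul])
  have one_le_TJ : 1 ≤ TJ := (FractionalIdeal.le_div_iff_mul_le hB0).mpr (by rw [one_mul])
  have hTIA : TI * A ≤ A := (FractionalIdeal.le_div_iff_mul_le hA0).mp le_rfl
  have hTJB : TJ * B ≤ B := (FractionalIdeal.le_div_iff_mul_le hB0).mp le_rfl
  have hTI_sq : TI * TI ≤ TI := (FractionalIdeal.le_div_iff_mul_le hA0).mpr
    (by rw [mul_assoc]; exact le_trans ((fun h => mul_le_mul' le_rfl h) hTIA) hTIA)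
  have hTJ_sq : TJ * TJ ≤ TJ := (FractionalIdeal.le_div_iff_mul_le hB0).mpr
    (by rw [mul_assoc]; exact le_trans ((fun h => mul_le_mul' le_rfl h) hTJB) hTJB)
  have hTI_pow : ∀ k : ℕ, TI ^ k ≤ TI := by
    intro k
    induction k with
    | zero => simpa using one_le_TI
    | succ k ih =>
      calc TI ^ (k + 1) = TI ^ k * TI := pow_succ TI k
        _ ≤ TI * TI := (fun h => mul_le_mul' h le_rfl) ih
        _ ≤ TI := hTI_sq
  have hTJ_pow : ∀ k : ℕ, TJ ^ k ≤ TJ := by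
    intro k
    induction k with
    | zero => simpa using one_le_TJ
    | succ k ih =>
      calc TJ ^ (k + 1) = TJ ^ k * TJ := pow_succ TJ k
        _ ≤ TJ * TJ := (fun h => mul_le_mul' h le_rfl) ih
        _ ≤ TJ := hTJ_sq
  have hTI_pow_eq : TI ^ n = TI := by
    refine le_antisymm (hTI_pow n) ?_
    calc TI = 1 ^ m * TI := by rw [one_pow, one_mul]
      _ ≤ TI ^ m * TI := (fun h => mul_le_mul' h le_rfl) (by simpa using fi_pow_mono one_le_TI m)
      _ = TI ^ n := (pow_succ TI m).symm
  have hTJ_pow_eq : TJ ^ n = TJ := by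
    refine le_antisymm (hTJ_pow n) ?_
    calc TJ = 1 ^ m * TJ := by rw [one_pow, one_mul]
      _ ≤ TJ ^ m * TJ := (fun h => mul_le_mul' h le_rfl) (by simpa using fi_pow_mono one_le_TJ m)
      _ = TJ ^ n := (pow_succ TJ m).symm
  have hAnSn : A ^ n * S ^ n = TI := by rw [← mul_pow, hAS, hTI_pow_eq]
  have hBnSJn : B ^ n * SJ ^ n = TJ := by rw [← mul_pow, hBSJ, hTJ_pow_eq]
  -- T_J ≤ T_I
  have hTJBn : TJ * B ^ n ≤ B ^ n := by
    calc TJ * B ^ n = TJ * B * B ^ m := by rw [pow_succ' B m, ← mul_assoc]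
      _ ≤ B * B ^ m := (fun h => mul_le_mul' h le_rfl) hTJB
      _ = B ^ n := (pow_succ' B m).symm
  have hTIAn : TI * A ^ n ≤ A ^ n := by
    calc TI * A ^ n = TI * A * A ^ m := by rw [pow_succ' A m, ← mul_assoc]
      _ ≤ A * A ^ m := (fun h => mul_le_mul' h le_rfl) hTIA
      _ = A ^ n := (pow_succ' A m).symm
  have hTJTI : TJ ≤ TI := by
    calc TJ = 1 * TJ := (one_mul TJ).symm
      _ ≤ TI * TJ := (fun h => mul_le_mul' h le_rfl) one_le_TI
      _ = TJ * (A ^ n * S ^ n) := by rw [hAnSn, mul_comm]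
      _ = TJ * A ^ n * S ^ n := (mul_assoc _ _ _).symm
      _ = TJ * B ^ n * S ^ n := by rw [hpow]
      _ ≤ B ^ n * S ^ n := (fun h => mul_le_mul' h le_rfl) hTJBn
      _ = A ^ n * S ^ n := by rw [hpow]
      _ = TI := hAnSn
  have hTITJ : TI ≤ TJ := by
    calc TI = 1 * TI := (one_mul TI).symm
      _ ≤ TJ * TI := (fun h => mul_le_mul' h le_rfl) one_le_TJ
      _ = TI * (B ^ n * SJ ^ n) := by rw [hBnSJn, mul_comm]
      _ = TI * B ^ n * SJ ^ n := (mul_assoc _ _ _).symm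
      _ = TI * A ^ n * SJ ^ n := by rw [hpow]
      _ ≤ A ^ n * SJ ^ n := (fun h => mul_le_mul' h le_rfl) hTIAn
      _ = B ^ n * SJ ^ n := by rw [hpow]
      _ = TJ := hBnSJn
  have hTeq : TI = TJ := le_antisymm hTITJ hTJTI
  -- A ≤ B
  have hBS_le : B ^ m * S ^ m ≤ TI := by
    calc B ^ m * S ^ m = (B * S) ^ m := (mul_pow B S m).symm
      _ ≤ (A * S) ^ m := fi_pow_mono ((fun h => mul_le_mul' h le_rfl) hBA) m
      _ = TI ^ m := by rw [hAS]
      _ ≤ TI := hTI_pow m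
  have hAB : A ≤ B := by
    calc A = 1 * A := (one_mul A).symm
      _ ≤ TI * A := (fun h => mul_le_mul' h le_rfl) one_le_TI
      _ = A ^ n * S ^ n * A := by rw [hAnSn]
      _ = B ^ n * S ^ n * A := by rw [hpow]
      _ = B * (B ^ m * S ^ m * (A * S)) := by ring
      _ ≤ B * (TI * TI) := (fun h => mul_le_mul' le_rfl h)
          (by rw [hAS]; exact (fun h => mul_le_mul' h le_rfl) hBS_le)
      _ ≤ B * TI := (fun h => mul_le_mul' le_rfl h) hTI_sq
      _ = TJ * B := by rw [hTeq, mul_comm]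
      _ ≤ B := hTJB
  have : A = B := le_antisymm hAB hBA
  have hIJ : I = J := by
    rw [← FractionalIdeal.coeIdeal_inj (K := K), ← hAdef, ← hBdef, this]
  exact hJI.ne hIJ.symm
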